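/- Let 𝔱 be a finite-dimensional real vector space, Γ ⊂ 𝔱 a discrete subgroup spanning 𝔱, and V ⊂ 𝔱 a linear subspace. The following are equivalent: (b) Γ ∩ V spans V; (c) the image ρ(Γ) under the projection ρ: 𝔱 → 𝔱/V is discrete and spans 𝔱/V; (d) the subgroup V + Γ is closed in 𝔱. -/

import Mathlib

open Topology Module Submodule

theorem aux_discrete_of_closed_countable {E : Type*} [NormedAddCommGroup E] [CompleteSpace E]
    (H : AddSubgroup E) (hc : IsClosed (H : Set E)) [Countable H] :
    DiscreteTopology H := by
  have : CompleteSpace H := hc.completeSpace_coe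
  have hcover : (⋃ h : H, ({h} : Set H)) = Set.univ := by ext x; simp
  obtain ⟨h, hh⟩ := nonempty_interior_of_iUnion_of_closed
    (f := fun h : H => ({h} : Set H)) (fun h => isClosed_singleton) hcover
  have hopen : IsOpen ({h} : Set H) := by
    have heq : interior ({h} : Set H) = {h} := by
      refine Set.Subset.antisymm interior_subset ?_
      obtain ⟨x, hx⟩ := hh
      have hxh : x ∈ ({h} : Set H) := interior_subset hx
      rw [Set.mem_singleton_iff] at hxh
      intro y hy
      rw [Set.mem_singleton_iff] at hy
      subst hy
      exact hxh ▸ hx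
    rw [← heq]; exact isOpen_interior
  rw [discreteTopology_iff_isOpen_singleton]
  intro x
  have himg := (Homeomorph.addLeft (x - h)).isOpenMap _ hopen
  have heq2 : (⇑(Homeomorph.addLeft (x - h)) '' ({h} : Set H)) = {x} := by
    rw [Set.image_singleton]
    congr 1
    show x - h + h = x
    exact sub_add_cancel x h
  rwa [heq2] at himg

theorem aux_discrete_congr {E : Type*} [TopologicalSpace E] {s t : Set E} (h : s = t)
    (inst : DiscreteTopology s) : DiscreteTopology t := h ▸ inst

/- STATEMENT 14: Let `𝔱` be a finite-dimensional real vector space, `Γ ⊂ 𝔱`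
a discrete subgroup spanning `𝔱` (a lattice) and `V ⊂ 𝔱` a linear subspace.
TFAE: (b) `Γ ∩ V` spans `V`; (c) the image `ρ(Γ)` in `𝔱/V` is discrete and
spans `𝔱/V`; (d) the subgroup `V + Γ` is closed in `𝔱`. -/

theorem stmt14 {𝔱 : Type*} [NormedAddCommGroup 𝔱] [NormedSpace ℝ 𝔱]
    [FiniteDimensional ℝ 𝔱]
    (Γ : AddSubgroup 𝔱) (hdisc : DiscreteTopology Γ)
    (hspan : Submodule.span ℝ (Γ : Set 𝔱) = ⊤)
    (V : Submodule ℝ 𝔱) :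
    -- (b) ↔ (d)
    ((Submodule.span ℝ ((Γ : Set 𝔱) ∩ (V : Set 𝔱)) = V) ↔
      IsClosed {x : 𝔱 | ∃ v ∈ V, ∃ γ ∈ Γ, x = v + γ}) ∧
    -- (c) ↔ (d)
    (((DiscreteTopology (Γ.map V.mkQ.toAddMonoidHom)) ∧
      Submodule.span ℝ ((Γ.map V.mkQ.toAddMonoidHom : AddSubgroup (𝔱 ⧸ V)) :
        Set (𝔱 ⧸ V)) = ⊤) ↔
      IsClosed {x : 𝔱 | ∃ v ∈ V, ∃ γ ∈ Γ, x = v + γ}) := by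
  classical
  obtain ⟨W, hW⟩ := Submodule.exists_isCompl V
  set e : (𝔱 ⧸ V) ≃ₗ[ℝ] W := Submodule.quotientEquivOfIsCompl V W hW with he
  set f : 𝔱 →ₗ[ℝ] W := e.toLinearMap ∘ₗ V.mkQ with hf
  have hmkQc : Continuous (V.mkQ : 𝔱 → 𝔱 ⧸ V) := continuous_quot_mk
  have hfc : Continuous f := f.continuous_of_finiteDimensional
  have hq : Topology.IsQuotientMap (V.mkQ : 𝔱 → 𝔱 ⧸ V) :=
    QuotientAddGroup.isOpenMap_coe.isQuotientMap hmkQc (Submodule.Quotient.mk_surjective V)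
  have hec : Continuous (e : (𝔱 ⧸ V) → W) := by
    rw [hq.continuous_iff]
    exact hfc
  have hesymmc : Continuous (e.symm : W → 𝔱 ⧸ V) := by
    have h1 : (e.symm : W → 𝔱 ⧸ V) = fun (w : W) => V.mkQ (w : 𝔱) := by
      funext w
      exact Submodule.quotientEquivOfIsCompl_symm_apply V W hW w
    rw [h1]
    exact hmkQc.comp continuous_subtype_val
  set G : AddSubgroup (𝔱 ⧸ V) := Γ.map V.mkQ.toAddMonoidHom with hG
  set Γ' : AddSubgroup W := Γ.map f.toAddMonoidHom with hΓ'
  -- basic set identities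
  have hΓ'set : (Γ' : Set W) = ⇑e '' (G : Set (𝔱 ⧸ V)) := by
    rw [hΓ', hG, AddSubgroup.coe_map, AddSubgroup.coe_map, Set.image_image]
    rfl
  have hGset : (G : Set (𝔱 ⧸ V)) = ⇑e.symm '' (Γ' : Set W) := by
    rw [hΓ'set, Set.image_image]
    simp only [LinearEquiv.symm_apply_apply, Set.image_id']
  -- kernel of f
  have hker : ∀ y : 𝔱, f y = 0 ↔ y ∈ V := by
    intro y
    have h2 : f y = e (V.mkQ y) := rfl
    rw [h2, e.map_eq_zero_iff]
    exact Submodule.Quotient.mk_eq_zero V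
  -- the set S
  have hSeq : {x : 𝔱 | ∃ v ∈ V, ∃ γ ∈ Γ, x = v + γ} = ⇑f ⁻¹' (Γ' : Set W) := by
    ext x
    simp only [Set.mem_setOf_eq, Set.mem_preimage, hΓ', AddSubgroup.coe_map,
      Set.mem_image, SetLike.mem_coe]
    constructor
    · rintro ⟨v, hv, γ, hγ, rfl⟩
      refine ⟨γ, hγ, ?_⟩
      have hv0 : f v = 0 := (hker v).mpr hv
      show f γ = f (v + γ)
      rw [map_add, hv0, zero_add]
    · rintro ⟨γ, hγ, hfγ⟩
      refine ⟨x - γ, ?_, γ, hγ, by abel⟩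
      rw [← hker]
      rw [map_sub]
      show f x - f γ = 0
      rw [← hfγ]
      exact sub_self _
  -- f is a quotient map
  have hfsurj : Function.Surjective f := by
    intro w
    obtain ⟨q, hq'⟩ := e.surjective w
    obtain ⟨x, hx⟩ := Submodule.Quotient.mk_surjective V q
    exact ⟨x, by rw [show f x = e (V.mkQ x) from rfl, show V.mkQ x = Submodule.Quotient.mk x from rfl, hx, hq']⟩
  have hfopen : IsOpenMap f := by
    have h1 : ⇑f = ⇑e ∘ (V.mkQ : 𝔱 → 𝔱 ⧸ V) := rfl
    rw [h1]
    refine IsOpenMap.comp ?_ QuotientAddGroup.isOpenMap_coe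
    intro U hU
    have : ⇑e '' U = ⇑e.symm ⁻¹' U := by
      ext w; simp [Set.mem_image, Set.mem_preimage]
      constructor
      · rintro ⟨q, hq', rfl⟩; simpa using hq'
      · intro hq'; exact ⟨e.symm w, hq', by simp⟩
    rw [this]
    exact hU.preimage hesymmc
  have hfquot : Topology.IsQuotientMap ⇑f := hfopen.isQuotientMap hfc hfsurj
  have hclosed_iff : IsClosed (Γ' : Set W) ↔ IsClosed {x : 𝔱 | ∃ v ∈ V, ∃ γ ∈ Γ, x = v + γ} := by
    rw [hSeq]
    exact (hfquot.isClosed_preimage).symm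
  -- discreteness transfer
  have hdiscGiff : DiscreteTopology G ↔ DiscreteTopology Γ' := by
    constructor
    · intro hdG
      have h1 : DiscreteTopology (G : Set (𝔱 ⧸ V)) := hdG
      have h2 : DiscreteTopology (⇑e.symm ⁻¹' (G : Set (𝔱 ⧸ V)) : Set W) :=
        DiscreteTopology.preimage_of_continuous_injective _ hesymmc e.symm.injective
      have h3 : (⇑e.symm ⁻¹' (G : Set (𝔱 ⧸ V))) = (Γ' : Set W) := by
        rw [hΓ'set]
        ext w
        simp only [Set.mem_preimage, Set.mem_image]
        constructor
        · intro hw; exact ⟨e.symm w, hw, by simp⟩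
        · rintro ⟨q, hq', rfl⟩; simpa using hq'
      exact aux_discrete_congr h3 h2
    · intro hdΓ'
      have h1 : DiscreteTopology (Γ' : Set W) := hdΓ'
      have h2 : DiscreteTopology (⇑e ⁻¹' (Γ' : Set W) : Set (𝔱 ⧸ V)) :=
        DiscreteTopology.preimage_of_continuous_injective _ hec e.injective
      have h3 : (⇑e ⁻¹' (Γ' : Set W)) = (G : Set (𝔱 ⧸ V)) := by
        rw [hΓ'set]
        ext q
        simp only [Set.mem_preimage, Set.mem_image]
        constructor
        · rintro ⟨q', hq', hqq⟩
          rwa [e.injective hqq] at hq'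
        · intro hq'; exact ⟨q, hq', rfl⟩
      exact aux_discrete_congr h3 h2
  -- spanning facts (always true)
  have hspanΓ' : Submodule.span ℝ (Γ' : Set W) = ⊤ := by
    rw [hΓ', AddSubgroup.coe_map, show ⇑f.toAddMonoidHom = ⇑f from rfl,
      Submodule.span_image, hspan, Submodule.map_top, LinearMap.range_eq_top.mpr hfsurj]
  have hspanG : Submodule.span ℝ (G : Set (𝔱 ⧸ V)) = ⊤ := by
    rw [hG, AddSubgroup.coe_map, show ⇑V.mkQ.toAddMonoidHom = ⇑V.mkQ from rfl,
      Submodule.span_image, hspan, Submodule.map_top, Submodule.range_mkQ]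
  -- countability
  set Λ : Submodule ℤ 𝔱 := AddSubgroup.toIntSubmodule Γ with hΛ
  have hΛdisc : DiscreteTopology Λ := hdisc
  have hΛzl : IsZLattice ℝ Λ := ⟨hspan⟩
  have hΛfin : Module.Finite ℤ Λ := inferInstance
  have hΛfree : Module.Free ℤ Λ := inferInstance
  have hcountΛ : Countable Λ := inferInstance
  have hcountΓ' : Countable Γ' := by
    have h1 : (Γ : Set 𝔱).Countable := Set.countable_coe_iff.mp hcountΛ
    have h2 : ((Γ' : Set W)).Countable := by
      rw [hΓ', AddSubgroup.coe_map]
      exact h1.image _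
    exact Set.countable_coe_iff.mpr h2
  -- the ℤ-linear map g : Λ → W
  set g : Λ →ₗ[ℤ] W := (f.restrictScalars ℤ) ∘ₗ Λ.subtype with hg
  have hnd : finrank ℝ V + finrank ℝ W = finrank ℝ 𝔱 := Submodule.finrank_add_eq_of_isCompl hW
  have hrankΛ : Module.rank ℤ Λ = (finrank ℝ 𝔱 : Cardinal) := by
    rw [← Module.finrank_eq_rank]
    norm_cast
    exact ZLattice.rank ℝ Λ
  have master : Module.rank ℤ (LinearMap.range g) + Module.rank ℤ (LinearMap.ker g)
      = (finrank ℝ 𝔱 : Cardinal) := by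
    rw [LinearMap.rank_range_add_rank_ker g, hrankΛ]
  have hrangeΓ' : LinearMap.range g = AddSubgroup.toIntSubmodule Γ' := by
    ext w
    rw [LinearMap.mem_range]
    change _ ↔ w ∈ Γ'
    rw [hΓ', AddSubgroup.mem_map]
    constructor
    · rintro ⟨y, rfl⟩
      exact ⟨(y : 𝔱), y.2, rfl⟩
    · rintro ⟨x, hx, rfl⟩
      exact ⟨⟨x, hx⟩, rfl⟩
  -- kernel rank computation
  have hkerrank : ∀ (U : Submodule ℝ 𝔱), ((Γ : Set 𝔱) ∩ V ⊆ (U : Set 𝔱)) →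
      (U ≤ Submodule.span ℝ ((Γ : Set 𝔱) ∩ V)) →
      Module.rank ℤ (LinearMap.ker g) = (finrank ℝ U : Cardinal) := by
    intro U hsub hle
    have hUV : U ≤ V :=
      le_trans hle (Submodule.span_le.mpr Set.inter_subset_right)
    set L₁ : Submodule ℤ U := Λ.comap (U.subtype.restrictScalars ℤ) with hL₁
    have hL₁disc : DiscreteTopology L₁ := by
      have h1 : DiscreteTopology (Γ : Set 𝔱) := hdisc
      have h2 : DiscreteTopology ((Subtype.val : U → 𝔱) ⁻¹' (Γ : Set 𝔱)) :=
        DiscreteTopology.preimage_of_continuous_injective _ continuous_subtype_val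
          Subtype.val_injective
      have h3 : ((Subtype.val : U → 𝔱) ⁻¹' (Γ : Set 𝔱)) = (L₁ : Set U) := rfl
      exact aux_discrete_congr h3 h2
    have himg : U.subtype '' (L₁ : Set U) = (Γ : Set 𝔱) ∩ V := by
      ext x
      constructor
      · rintro ⟨y, hy, rfl⟩
        exact ⟨hy, hUV y.2⟩
      · intro hx
        exact ⟨⟨x, hsub hx⟩, hx.1, rfl⟩
    have hsp : Submodule.span ℝ (L₁ : Set U) = ⊤ := by
      apply Submodule.map_injective_of_injective (Submodule.injective_subtype U)
      rw [Submodule.map_span, Submodule.map_top, Submodule.range_subtype]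
      rw [show (⇑U.subtype '' (L₁ : Set U)) = (Γ : Set 𝔱) ∩ V from himg]
      exact le_antisymm (Submodule.span_le.mpr hsub) hle
    have hL₁zl : IsZLattice ℝ L₁ := ⟨hsp⟩
    have h6 : finrank ℤ L₁ = finrank ℝ U := ZLattice.rank ℝ L₁
    have hmem1 : ∀ x : LinearMap.ker g, (((x : Λ) : 𝔱)) ∈ U := by
      intro x
      refine hsub ⟨(x : Λ).2, ?_⟩
      have hx0 : f (((x : Λ) : 𝔱)) = 0 := x.2
      exact (hker _).mp hx0
    let φ : LinearMap.ker g ≃ₗ[ℤ] L₁ :=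
      { toFun := fun x => ⟨⟨((x : Λ) : 𝔱), hmem1 x⟩, (x : Λ).2⟩
        invFun := fun y => ⟨⟨((y : U) : 𝔱), y.2⟩,
          show f (((y : U) : 𝔱)) = 0 from (hker _).mpr (hUV (y : U).2)⟩
        map_add' := fun x y => rfl
        map_smul' := fun c x => rfl
        left_inv := fun x => Subtype.ext (Subtype.ext rfl)
        right_inv := fun y => Subtype.ext (Subtype.ext rfl) }
    rw [φ.rank_eq, ← Module.finrank_eq_rank, h6]
  -- Direction: discrete Γ' → (b)
  have D1 : DiscreteTopology Γ' → Submodule.span ℝ ((Γ : Set 𝔱) ∩ V) = V := by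
    intro hdΓ'
    haveI hΓ'I : DiscreteTopology (AddSubgroup.toIntSubmodule Γ') := hdΓ'
    haveI hΓ'zl : IsZLattice ℝ (AddSubgroup.toIntSubmodule Γ') :=
      ⟨by rw [AddSubgroup.coe_toIntSubmodule]; exact hspanΓ'⟩
    have h7 : finrank ℤ (AddSubgroup.toIntSubmodule Γ') = finrank ℝ W := ZLattice.rank ℝ _
    have h8 : Module.rank ℤ (LinearMap.range g) = (finrank ℝ W : Cardinal) := by
      rw [hrangeΓ', ← Module.finrank_eq_rank, h7]
    have h9 := hkerrank (Submodule.span ℝ ((Γ : Set 𝔱) ∩ V)) Submodule.subset_span le_rfl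
    rw [h8, h9] at master
    have h10 : finrank ℝ W + finrank ℝ (Submodule.span ℝ ((Γ : Set 𝔱) ∩ V)) = finrank ℝ 𝔱 := by
      exact_mod_cast master
    have hle : Submodule.span ℝ ((Γ : Set 𝔱) ∩ V) ≤ V :=
      Submodule.span_le.mpr Set.inter_subset_right
    refine Submodule.eq_of_le_of_finrank_le hle ?_
    omega
  -- Direction: (b) → discrete Γ'
  have D2 : Submodule.span ℝ ((Γ : Set 𝔱) ∩ V) = V → DiscreteTopology Γ' := by
    intro hb
    have h9 := hkerrank V Set.inter_subset_right (le_of_eq hb.symm)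
    rw [h9] at master
    have h10 : Module.rank ℤ (LinearMap.range g) = (finrank ℝ W : Cardinal) := by
      have h12 : finrank ℝ W + finrank ℝ V = finrank ℝ 𝔱 := by omega
      rw [← h12, Nat.cast_add] at master
      exact (Cardinal.add_nat_inj (finrank ℝ V)).mp master
    haveI : Module.Finite ℤ (LinearMap.range g) := Module.Finite.range g
    haveI : Module.IsTorsionFree ℤ W := by
      haveI : IsAddTorsionFree W := IsAddTorsionFree.of_isTorsionFree ℝ W
      infer_instance
    haveI : Module.IsTorsionFree ℤ (LinearMap.range g) := inferInstance
    haveI : Module.Free ℤ (LinearMap.range g) := Module.free_of_finite_type_torsion_free'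
    have hfinr : finrank ℤ (LinearMap.range g) = finrank ℝ W :=
      Module.finrank_eq_of_rank_eq h10
    let c : Basis (Fin (finrank ℝ W)) ℤ (LinearMap.range g) :=
      Module.finBasisOfFinrankEq ℤ _ hfinr
    set v : Fin (finrank ℝ W) → W := fun i => ((c i : LinearMap.range g) : W) with hv
    have hsp : Submodule.span ℤ (Set.range v) = LinearMap.range g := by
      have h1 : Set.range v = (LinearMap.range g).subtype '' (Set.range ⇑c) := by
        rw [← Set.range_comp]; rfl
      rw [h1, ← Submodule.map_span, c.span_eq, Submodule.map_subtype_top]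
    have hrgset : ((LinearMap.range g : Submodule ℤ W) : Set W) = (Γ' : Set W) := by
      rw [hrangeΓ']; rfl
    have hRs : ⊤ ≤ Submodule.span ℝ (Set.range v) := by
      rw [← Submodule.span_span_of_tower (R := ℤ), hsp, hrgset, hspanΓ']
    let bW := basisOfTopLeSpanOfCardEqFinrank v hRs (by simp)
    have hbW : Set.range ⇑bW = Set.range v := by
      rw [coe_basisOfTopLeSpanOfCardEqFinrank]
    haveI hdZ : DiscreteTopology (Submodule.span ℤ (Set.range ⇑bW)) := inferInstance
    have hfin : DiscreteTopology (LinearMap.range g) := by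
      have h2 : ((Submodule.span ℤ (Set.range ⇑bW)) : Set W)
          = ((LinearMap.range g : Submodule ℤ W) : Set W) := by rw [hbW, hsp]
      exact aux_discrete_congr h2 hdZ
    exact aux_discrete_congr hrgset hfin
  -- assembly
  refine ⟨⟨?_, ?_⟩, ?_, ?_⟩
  · intro hb
    haveI := D2 hb
    exact hclosed_iff.mp AddSubgroup.isClosed_of_discrete
  · intro hS
    haveI := hcountΓ'
    exact D1 (aux_discrete_of_closed_countable Γ' (hclosed_iff.mpr hS))
  · rintro ⟨hdG, -⟩
    haveI := hdiscGiff.mp hdG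
    exact hclosed_iff.mp AddSubgroup.isClosed_of_discrete
  · intro hS
    haveI := hcountΓ'
    exact ⟨hdiscGiff.mpr (aux_discrete_of_closed_countable Γ' (hclosed_iff.mpr hS)), hspanG⟩
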